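/- arXiv:2603.04020 — 3 statements merged into one kernel-verified Lean document; each statement's English description precedes it below -/
import Mathlib

section
/- Let G be an étale groupoid. For every f ∈ C_c(G) (span of compactly supported continuous functions on open Hausdorff subsets), the function F(f) : G⁰ → ℂ given by F(f)(x) = Σ_{g ∈ G_x^x} f(g) is Borel measurable. -/
open MeasureTheory
open scoped ENNReal

/-- An étale groupoid: a topological groupoid (possibly non-Hausdorff) on the type `G`,
with partially defined multiplication `mul g h` (meaningful when `src g = rng h`),
inversion `inv`, source and range maps `src`, `rng`, and open unit space `unitSpace`
which is locally compact and Hausdorff; the source and range maps are local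
homeomorphisms. -/
structure EtaleGroupoid (G : Type*) [TopologicalSpace G] : Type _ where
  src : G → G
  rng : G → G
  mul : G → G → G
  inv : G → G
  unitSpace : Set G
  src_mem : ∀ g, src g ∈ unitSpace
  rng_mem : ∀ g, rng g ∈ unitSpace
  src_unit : ∀ u ∈ unitSpace, src u = u
  rng_unit : ∀ u ∈ unitSpace, rng u = u
  src_mul : ∀ g h, src g = rng h → src (mul g h) = src h
  rng_mul : ∀ g h, src g = rng h → rng (mul g h) = rng g
  mul_assoc : ∀ g h k, src g = rng h → src h = rng k →
    mul (mul g h) k = mul g (mul h k)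
  src_inv : ∀ g, src (inv g) = rng g
  rng_inv : ∀ g, rng (inv g) = src g
  inv_mul_self : ∀ g, mul (inv g) g = src g
  mul_inv_self : ∀ g, mul g (inv g) = rng g
  mul_src_self : ∀ g, mul g (src g) = g
  rng_mul_self : ∀ g, mul (rng g) g = g
  isOpen_unitSpace : IsOpen unitSpace
  t2_unitSpace : ∀ x ∈ unitSpace, ∀ y ∈ unitSpace, x ≠ y →
    ∃ U V : Set G, IsOpen U ∧ IsOpen V ∧ x ∈ U ∧ y ∈ V ∧ U ∩ V = ∅
  locallyCompact_unitSpace : ∀ x ∈ unitSpace, ∀ U : Set G, IsOpen U → x ∈ U →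
    ∃ K V : Set G, IsCompact K ∧ IsOpen V ∧ x ∈ V ∧ V ⊆ K ∧ K ⊆ U ∩ unitSpace
  continuous_inv : Continuous inv
  continuousOn_mul : ContinuousOn (fun p : G × G => mul p.1 p.2)
    {p : G × G | src p.1 = rng p.2}
  etale_src : ∀ g : G, ∃ U : Set G, IsOpen U ∧ g ∈ U ∧ Set.InjOn src U ∧
    ContinuousOn src U ∧ ∀ V ⊆ U, IsOpen V → IsOpen (src '' V)
  etale_rng : ∀ g : G, ∃ U : Set G, IsOpen U ∧ g ∈ U ∧ Set.InjOn rng U ∧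
    ContinuousOn rng U ∧ ∀ V ⊆ U, IsOpen V → IsOpen (rng '' V)

namespace EtaleGroupoid

variable {G : Type*} [TopologicalSpace G] (E : EtaleGroupoid G)

/-- The isotropy of `G`: arrows with equal source and range. -/
def iso : Set G := {g : G | E.src g = E.rng g}

/-- An (open) bisection: an open set on which both the source and range maps are
injective (hence homeomorphisms onto their images). -/
def IsBisection (U : Set G) : Prop :=
  IsOpen U ∧ Set.InjOn E.src U ∧ Set.InjOn E.rng U

/-- The semifinite part of a measure:
`μ_sf(A) = sup { μ(B) : B ⊆ A Borel, μ(B) < ∞ }`. -/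
noncomputable def sfPart [MeasurableSpace G] (μ : Measure G) (A : Set G) : ℝ≥0∞ :=
  ⨆ (B : Set G) (_ : MeasurableSet B) (_ : B ⊆ A) (_ : μ B ≠ ⊤), μ B

/-- A Radon measure on the unit space `G⁰`: a Borel measure on `G` concentrated on
`G⁰` which is finite on compact subsets of `G⁰`, inner regular on open subsets of `G⁰`
and outer regular on Borel subsets of `G⁰`. -/
def IsRadonOnUnits [MeasurableSpace G] (μ : Measure G) : Prop :=
  μ E.unitSpaceᶜ = 0 ∧
  (∀ K : Set G, K ⊆ E.unitSpace → IsCompact K → μ K ≠ ⊤) ∧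
  (∀ U : Set G, IsOpen U → U ⊆ E.unitSpace →
    μ U = ⨆ (K : Set G) (_ : IsCompact K) (_ : K ⊆ U), μ K) ∧
  (∀ A : Set G, MeasurableSet A → A ⊆ E.unitSpace →
    μ A = ⨅ (U : Set G) (_ : IsOpen U) (_ : A ⊆ U ∧ U ⊆ E.unitSpace), μ U)

/-- `G` is essentially free with respect to `μ`:
`μ_sf(s(U ∩ Iso(G) \ G⁰)) = 0` for every open bisection `U`. -/
def EssentiallyFree [MeasurableSpace G] (μ : Measure G) : Prop :=
  ∀ U : Set G, E.IsBisection U →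
    sfPart μ (E.src '' ((U ∩ E.iso) \ E.unitSpace)) = 0

end EtaleGroupoid

namespace EtaleGroupoid

variable (G : Type*) [TopologicalSpace G]

/-- The generating set of the convolution algebra `𝒞_c(G)`: functions which are
continuous on some open Hausdorff subset `U ⊆ G`, vanish outside a compact subset of
`U`, and vanish outside `U`. -/
def CcGen : Set (G → ℂ) :=
  {f : G → ℂ | ∃ U : Set G, IsOpen U ∧
    (∀ x ∈ U, ∀ y ∈ U, x ≠ y →
      ∃ V W : Set G, IsOpen V ∧ IsOpen W ∧ x ∈ V ∧ y ∈ W ∧ V ∩ W = ∅) ∧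
    ContinuousOn f U ∧
    ∃ K : Set G, K ⊆ U ∧ IsCompact K ∧ ∀ g ∉ K, f g = 0}

/-- The convolution algebra `𝒞_c(G)`: the linear span of the compactly supported
functions which are continuous on an open Hausdorff subset. -/
noncomputable def Cc : Submodule ℂ (G → ℂ) :=
  Submodule.span ℂ (CcGen G)

variable {G} (E : EtaleGroupoid G)

/-- The convolution product `(a * b)(g) = ∑_{g₁ g₂ = g} a(g₁) b(g₂)`. -/
noncomputable def convolution (a b : G → ℂ) : G → ℂ :=
  fun g => ∑' p : {p : G × G // E.src p.1 = E.rng p.2 ∧ E.mul p.1 p.2 = g},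
    a p.1.1 * b p.1.2

/-- The involution `a*(g) = conj (a (g⁻¹))`. -/
def starFun (a : G → ℂ) : G → ℂ :=
  fun g => star (a (E.inv g))

end EtaleGroupoid

section AuxLemmas

variable {G : Type*} [TopologicalSpace G]

/-- The source map of an étale groupoid is (globally) continuous. -/
theorem EtaleGroupoid.continuous_src (E : EtaleGroupoid G) : Continuous E.src := by
  rw [continuous_iff_continuousAt]
  intro g
  obtain ⟨U, hUo, hgU, _, hc, _⟩ := E.etale_src g
  exact hc.continuousAt (hUo.mem_nhds hgU)

/-- The range map of an étale groupoid is (globally) continuous. -/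
theorem EtaleGroupoid.continuous_rng (E : EtaleGroupoid G) : Continuous E.rng := by
  rw [continuous_iff_continuousAt]
  intro g
  obtain ⟨U, hUo, hgU, _, hc, _⟩ := E.etale_rng g
  exact hc.continuousAt (hUo.mem_nhds hgU)

/-- The isotropy of an étale groupoid is closed, since the unit space is Hausdorff. -/
theorem EtaleGroupoid.isClosed_iso (E : EtaleGroupoid G) : IsClosed E.iso := by
  rw [← isOpen_compl_iff, isOpen_iff_forall_mem_open]
  intro g hg
  obtain ⟨U, V, hU, hV, hsU, hrV, hUV⟩ :=
    E.t2_unitSpace _ (E.src_mem g) _ (E.rng_mem g) hg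
  refine ⟨E.src ⁻¹' U ∩ E.rng ⁻¹' V, ?_, ?_, ⟨hsU, hrV⟩⟩
  · rintro h ⟨h1, h2⟩ hiso
    have : E.src h ∈ U ∩ V := ⟨h1, hiso ▸ h2⟩
    simp [hUV] at this
  · exact (hU.preimage E.continuous_src).inter (hV.preimage E.continuous_rng)

/-- If `g` is continuous on a measurable set `s`, then `s ∩ g ⁻¹' t` is measurable for
every measurable `t`. -/
theorem aux_measurableSet_inter_preimage {α β : Type*}
    [TopologicalSpace α] [MeasurableSpace α] [BorelSpace α]
    [TopologicalSpace β] [MeasurableSpace β] [BorelSpace β]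
    {g : α → β} {s : Set α} {t : Set β}
    (hg : ContinuousOn g s) (hs : MeasurableSet s) (ht : MeasurableSet t) :
    MeasurableSet (s ∩ g ⁻¹' t) := by
  have h1 : Measurable (s.restrict g) := hg.restrict.measurable
  have h2 : MeasurableSet (s.restrict g ⁻¹' t) := h1 ht
  have heq : s ∩ g ⁻¹' t = Subtype.val '' (s.restrict g ⁻¹' t) := by
    ext x
    constructor
    · rintro ⟨hxs, hxt⟩
      exact ⟨⟨x, hxs⟩, hxt, rfl⟩
    · rintro ⟨⟨y, hy⟩, hyt, rfl⟩
      exact ⟨hy, hyt⟩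
  rw [heq]
  exact hs.subtype_image h2

/-- The indicator of a measurable set applied to a function continuous on that set is
measurable. -/
theorem aux_measurable_indicator {α : Type*}
    [TopologicalSpace α] [MeasurableSpace α] [BorelSpace α]
    {h : α → ℂ} {s : Set α} (hs : MeasurableSet s) (hc : ContinuousOn h s) :
    Measurable (s.indicator h) := by
  apply measurable_of_restrict_of_restrict_compl hs
  · have heq : s.domRestrict (s.indicator h) = s.domRestrict h := by
      funext a
      exact Set.indicator_of_mem a.2 h
    rw [heq]
    exact hc.restrict.measurable
  · have heq : sᶜ.domRestrict (s.indicator h) = fun _ => (0 : ℂ) := by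
      funext a
      exact Set.indicator_of_notMem a.2 h
    rw [heq]
    exact measurable_const

/-- The key generator case: for `f ∈ 𝒞_c`-generators, the isotropy sums are summable and
the resulting function on the unit space is measurable. -/
theorem aux_gen {G : Type*} [TopologicalSpace G] [MeasurableSpace G] [BorelSpace G]
    [Nonempty G] (E : EtaleGroupoid G) (f : G → ℂ) (hf : f ∈ EtaleGroupoid.CcGen G) :
    (∀ x : G, Summable (fun g : {g : G // E.src g = x ∧ E.rng g = x} => f g)) ∧
    Measurable (fun x : E.unitSpace =>
      ∑' g : {g : G // E.src g = (x : G) ∧ E.rng g = (x : G)}, f g) := by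
  obtain ⟨U, hUo, -, hfc, K, hKU, hKc, hfK⟩ := hf
  -- charts around points of K on which `src` is injective, continuous and open
  have hch : ∀ g : K, ∃ W : Set G, IsOpen W ∧ (g : G) ∈ W ∧ Set.InjOn E.src W ∧
      ContinuousOn E.src W ∧ ∀ V ⊆ W, IsOpen V → IsOpen (E.src '' V) :=
    fun g => E.etale_src g
  choose W hWo hWm hWinj _hWcont hWmap using hch
  have hcov : K ⊆ ⋃ g : K, (W g ∩ U) := fun x hx =>
    Set.mem_iUnion.2 ⟨⟨x, hx⟩, ⟨hWm ⟨x, hx⟩, hKU hx⟩⟩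
  obtain ⟨t, ht⟩ := hKc.elim_finite_subcover (fun g : K => W g ∩ U)
    (fun g => (hWo g).inter hUo) hcov
  classical
  set L : List K := t.toList with hL
  set n : ℕ := L.length with hn
  set V : ℕ → Set G := fun i => if h : i < n then W (L.get ⟨i, h⟩) ∩ U else ∅ with hV
  have hVo : ∀ i, IsOpen (V i) := by
    intro i
    simp only [hV]
    split
    · exact (hWo _).inter hUo
    · exact isOpen_empty
  have hVU : ∀ i, V i ⊆ U := by
    intro i
    simp only [hV]
    split
    · exact Set.inter_subset_right
    · exact Set.empty_subset U
  have hVinj : ∀ i, Set.InjOn E.src (V i) := by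
    intro i
    simp only [hV]
    split
    · exact (hWinj _).mono Set.inter_subset_left
    · simp [Set.InjOn]
  have hVmap : ∀ i, ∀ S ⊆ V i, IsOpen S → IsOpen (E.src '' S) := by
    intro i S hSV hSo
    by_cases h : i < n
    · apply hWmap (L.get ⟨i, h⟩) S _ hSo
      refine hSV.trans ?_
      simp only [hV, dif_pos h]
      exact Set.inter_subset_left
    · have : S = ∅ := by
        apply Set.eq_empty_of_subset_empty
        simpa only [hV, dif_neg h] using hSV
      simp [this]
  have hKV : ∀ g ∈ K, ∃ i, g ∈ V i := by
    intro g hg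
    have h1 := ht hg
    simp only [Set.mem_iUnion] at h1
    obtain ⟨a, haT, hga⟩ := h1
    obtain ⟨i, hi⟩ := List.get_of_mem (show a ∈ L from Finset.mem_toList.2 haT)
    refine ⟨(i : ℕ), ?_⟩
    have hilt : (i : ℕ) < n := i.2
    simp only [hV, dif_pos hilt]
    rw [show (⟨(i : ℕ), hilt⟩ : Fin L.length) = i from rfl, hi]
    exact hga
  -- disjointification
  set B : ℕ → Set G := fun i => V i \ ⋃ j, ⋃ (_ : j < i), V j with hB
  have hBV : ∀ i, B i ⊆ V i := fun i => Set.diff_subset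
  have hmemB : ∀ g ∈ K, ∃ i, g ∈ B i ∧ ∀ j, j ≠ i → g ∉ B j := by
    intro g hg
    have hex : ∃ i, g ∈ V i := hKV g hg
    refine ⟨Nat.find hex, ⟨Nat.find_spec hex, ?_⟩, ?_⟩
    · intro hmem
      simp only [Set.mem_iUnion] at hmem
      obtain ⟨j, hj, hgj⟩ := hmem
      exact Nat.find_min hex hj hgj
    · intro j hj hgB
      rcases lt_or_gt_of_ne hj with h | h
      · exact Nat.find_min hex h (hBV j hgB)
      · exact hgB.2 (Set.mem_iUnion.2 ⟨Nat.find hex, Set.mem_iUnion.2 ⟨h, Nat.find_spec hex⟩⟩)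
  -- the key pointwise identity
  have hkey : ∀ g : G, f g = ∑ i ∈ Finset.range n, (B i).indicator f g := by
    intro g
    by_cases hg : f g = 0
    · rw [hg]
      symm
      apply Finset.sum_eq_zero
      intro i _
      by_cases h : g ∈ B i
      · rw [Set.indicator_of_mem h, hg]
      · exact Set.indicator_of_notMem h f
    · have hgK : g ∈ K := by
        by_contra h
        exact hg (hfK g h)
      obtain ⟨m, hm, hmuniq⟩ := hmemB g hgK
      have hmn : m < n := by
        by_contra h
        have hVm : V m = ∅ := by simp only [hV, dif_neg h]
        have := hBV m hm
        rw [hVm] at this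
        exact this
      rw [Finset.sum_eq_single_of_mem m (Finset.mem_range.2 hmn)]
      · exact (Set.indicator_of_mem hm f).symm
      · intro j _ hjm
        exact Set.indicator_of_notMem (hmuniq j hjm) f
  -- sections of the source map
  set σ : ℕ → G → G := fun i => Function.invFunOn E.src (V i) with hσ
  set T : ℕ → Set G := fun i => E.src '' V i with hT
  have hTo : ∀ i, IsOpen (T i) := fun i => hVmap i (V i) subset_rfl (hVo i)
  have hσV : ∀ i, ∀ x ∈ T i, σ i x ∈ V i ∧ E.src (σ i x) = x := by
    intro i x hx
    obtain ⟨g, hgV, hgx⟩ := hx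
    exact ⟨Function.invFunOn_mem ⟨g, hgV, hgx⟩, Function.invFunOn_eq ⟨g, hgV, hgx⟩⟩
  have hσcont : ∀ i, ContinuousOn (σ i) (T i) := by
    intro i
    rw [continuousOn_iff']
    intro s hs
    refine ⟨E.src '' (s ∩ V i), hVmap i _ Set.inter_subset_right (hs.inter (hVo i)), ?_⟩
    ext x
    constructor
    · rintro ⟨hxs, hxT⟩
      obtain ⟨hσm, hσe⟩ := hσV i x hxT
      exact ⟨⟨σ i x, ⟨hxs, hσm⟩, hσe⟩, hxT⟩
    · rintro ⟨⟨g, ⟨hgs, hgV⟩, hgx⟩, hxT⟩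
      obtain ⟨hσm, hσe⟩ := hσV i x hxT
      have hgeq : σ i x = g := hVinj i hσm hgV (by rw [hσe, hgx])
      refine ⟨?_, hxT⟩
      rw [Set.mem_preimage, hgeq]
      exact hgs
  have hiso : MeasurableSet E.iso := E.isClosed_iso.measurableSet
  have hBmeas : ∀ i, MeasurableSet (B i) := fun i =>
    (hVo i).measurableSet.diff
      (isOpen_iUnion fun j => isOpen_iUnion fun _ => hVo j).measurableSet
  set A : ℕ → Set G := fun i => T i ∩ σ i ⁻¹' (B i ∩ E.iso) with hA
  have hAmeas : ∀ i, MeasurableSet (A i) := fun i =>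
    aux_measurableSet_inter_preimage (hσcont i) (hTo i).measurableSet
      ((hBmeas i).inter hiso)
  set ψ : ℕ → G → ℂ := fun i => (A i).indicator (f ∘ σ i) with hψ
  have hψmeas : ∀ i, Measurable (ψ i) := by
    intro i
    apply aux_measurable_indicator (hAmeas i)
    apply hfc.comp ((hσcont i).mono Set.inter_subset_left)
    intro x hx
    exact hVU i (hσV i x hx.1).1
  -- per-index tsum computation
  have hper : ∀ i, ∀ x : G,
      Summable (fun g : {g : G // E.src g = x ∧ E.rng g = x} => (B i).indicator f ↑g) ∧
      (∑' g : {g : G // E.src g = x ∧ E.rng g = x}, (B i).indicator f ↑g) = ψ i x := by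
    intro i x
    by_cases hex : ∃ g, g ∈ B i ∧ g ∈ E.iso ∧ E.src g = x
    · obtain ⟨g, hgB, hgiso, hgx⟩ := hex
      have hgV : g ∈ V i := hBV i hgB
      have hgr : E.rng g = x := by
        have : E.src g = E.rng g := hgiso
        rw [← this]; exact hgx
      have hxT : x ∈ T i := ⟨g, hgV, hgx⟩
      have hσg : σ i x = g := hVinj i (hσV i x hxT).1 hgV (by rw [(hσV i x hxT).2, hgx])
      have hxA : x ∈ A i := by
        refine ⟨hxT, ?_⟩
        rw [Set.mem_preimage, hσg]
        exact ⟨hgB, hgiso⟩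
      have hzero : ∀ h : {g : G // E.src g = x ∧ E.rng g = x},
          h ≠ ⟨g, hgx, hgr⟩ → (B i).indicator f ↑h = 0 := by
        intro h hne
        apply Set.indicator_of_notMem
        intro hhB
        apply hne
        apply Subtype.ext
        exact hVinj i (hBV i hhB) hgV (by rw [h.2.1, hgx])
      have hsum := hasSum_single
        (f := fun h : {g : G // E.src g = x ∧ E.rng g = x} => (B i).indicator f ↑h)
        ⟨g, hgx, hgr⟩ hzero
      refine ⟨hsum.summable, ?_⟩
      rw [hsum.tsum_eq]
      show (B i).indicator f g = ψ i x
      rw [Set.indicator_of_mem hgB]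
      have : ψ i x = (f ∘ σ i) x := Set.indicator_of_mem hxA _
      rw [this]
      show f g = f (σ i x)
      rw [hσg]
    · have hzero : ∀ h : {g : G // E.src g = x ∧ E.rng g = x},
          (B i).indicator f ↑h = 0 := by
        intro h
        apply Set.indicator_of_notMem
        intro hhB
        apply hex
        refine ⟨↑h, hhB, ?_, h.2.1⟩
        show E.src ↑h = E.rng ↑h
        rw [h.2.1, h.2.2]
      constructor
      · apply summable_of_ne_finset_zero (s := (∅ : Finset _))
        intro h _
        exact hzero h
      · rw [tsum_congr hzero, tsum_zero]
        symm
        apply Set.indicator_of_notMem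
        rintro ⟨hxT, hxp⟩
        rw [Set.mem_preimage] at hxp
        exact hex ⟨σ i x, hxp.1, hxp.2, (hσV i x hxT).2⟩
  -- summability
  have hsummable : ∀ x : G,
      Summable (fun g : {g : G // E.src g = x ∧ E.rng g = x} => f ↑g) := by
    intro x
    have heq : (fun g : {g : G // E.src g = x ∧ E.rng g = x} => f ↑g)
        = fun g : {g : G // E.src g = x ∧ E.rng g = x} =>
            ∑ i ∈ Finset.range n, (B i).indicator f ↑g := by
      funext g
      exact hkey ↑g
    rw [heq]
    exact summable_sum fun i _ => (hper i x).1
  refine ⟨hsummable, ?_⟩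
  -- the formula for the sum
  have htsum : ∀ x : G, (∑' g : {g : G // E.src g = x ∧ E.rng g = x}, f ↑g)
      = ∑ i ∈ Finset.range n, ψ i x := by
    intro x
    rw [tsum_congr (fun g : {g : G // E.src g = x ∧ E.rng g = x} => hkey ↑g),
      Summable.tsum_finsetSum fun i _ => (hper i x).1]
    exact Finset.sum_congr rfl fun i _ => (hper i x).2
  have heq : (fun x : E.unitSpace =>
      ∑' g : {g : G // E.src g = (x : G) ∧ E.rng g = (x : G)}, f ↑g)
      = (fun y : G => ∑ i ∈ Finset.range n, ψ i y) ∘ (Subtype.val : E.unitSpace → G) := by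
    funext x
    exact htsum ↑x
  rw [heq]
  exact (Finset.measurable_sum _ fun i _ => hψmeas i).comp measurable_subtype_coe

end AuxLemmas

/-- Let `G` be an étale groupoid.  For every `f ∈ 𝒞_c(G)`, the
function `F(f) : G⁰ → ℂ`, `F(f)(x) = ∑_{g ∈ G_x^x} f(g)`, is Borel measurable. -/
theorem measurable_sum_isotropy
    {G : Type*} [TopologicalSpace G] [MeasurableSpace G] [BorelSpace G]
    (E : EtaleGroupoid G) (f : G → ℂ) (hf : f ∈ EtaleGroupoid.Cc G) :
    Measurable (fun x : E.unitSpace =>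
      ∑' g : {g : G // E.src g = (x : G) ∧ E.rng g = (x : G)}, f g) := by
  rcases isEmpty_or_nonempty G with hG | hG
  · haveI : IsEmpty E.unitSpace := ⟨fun x => IsEmpty.false (x : G)⟩
    exact measurable_of_empty _
  · have hf' : f ∈ Submodule.span ℂ (EtaleGroupoid.CcGen G) := hf
    clear hf
    have key : (∀ x : G, Summable (fun g : {g : G // E.src g = x ∧ E.rng g = x} => f ↑g)) ∧
        Measurable (fun x : E.unitSpace =>
          ∑' g : {g : G // E.src g = (x : G) ∧ E.rng g = (x : G)}, f ↑g) := by
      induction hf' using Submodule.span_induction with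
      | mem a ha => exact aux_gen E a ha
      | zero =>
        constructor
        · intro x
          simpa using (summable_zero :
            Summable (fun _ : {g : G // E.src g = x ∧ E.rng g = x} => (0 : ℂ)))
        · have heq : (fun x : E.unitSpace =>
              ∑' g : {g : G // E.src g = (x : G) ∧ E.rng g = (x : G)}, (0 : G → ℂ) ↑g)
              = fun _ => (0 : ℂ) := by
            funext x
            simp
          rw [heq]
          exact measurable_const
      | add a b _ _ iha ihb =>
        constructor
        · intro x
          simpa using (iha.1 x).add (ihb.1 x)
        · have heq : (fun x : E.unitSpace =>
              ∑' g : {g : G // E.src g = (x : G) ∧ E.rng g = (x : G)}, (a + b) ↑g)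
              = fun x : E.unitSpace =>
                (∑' g : {g : G // E.src g = (x : G) ∧ E.rng g = (x : G)}, a ↑g)
                + ∑' g : {g : G // E.src g = (x : G) ∧ E.rng g = (x : G)}, b ↑g := by
            funext x
            simp only [Pi.add_apply]
            exact Summable.tsum_add (iha.1 ↑x) (ihb.1 ↑x)
          rw [heq]
          exact iha.2.add ihb.2
      | smul c a _ iha =>
        constructor
        · intro x
          simpa [smul_eq_mul] using (iha.1 x).mul_left c
        · have heq : (fun x : E.unitSpace =>
              ∑' g : {g : G // E.src g = (x : G) ∧ E.rng g = (x : G)}, (c • a) ↑g)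
              = fun x : E.unitSpace =>
                c * ∑' g : {g : G // E.src g = (x : G) ∧ E.rng g = (x : G)}, a ↑g := by
            funext x
            simp only [Pi.smul_apply, smul_eq_mul]
            exact tsum_mul_left
          rw [heq]
          exact iha.2.const_mul c
    exact key.2
end

section
/- Let Γ be a group acting faithfully and self-similarly on the rooted tree X* over a finite set X with |X| ≥ 2, such that every g ∈ Γ is finite-state. For u, v ∈ X* of equal length and g ∈ Γ, let g_{u,v} : vX^ℕ → uX^ℕ be given by g_{u,v}(vw) = u g(w). Then the Bernoulli measure μ on X^ℕ satisfies μ(Fix_{g_{u,v}} \ int(Fix_{g_{u,v}})) = 0 for all such g, u, v. -/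
/-- An automorphism of the rooted tree `X*` of finite words over `X`: a bijection of
`List X` preserving lengths and prefixes. -/
structure TreeAut (X : Type*) where
  toFun : List X → List X
  invFun : List X → List X
  left_inv : Function.LeftInverse invFun toFun
  right_inv : Function.RightInverse invFun toFun
  length_eq : ∀ w : List X, (toFun w).length = w.length
  take_append : ∀ w v : List X, (toFun (w ++ v)).take w.length = toFun w

/-- The restriction (section) `φ|_w` of a tree automorphism `φ` at the word `w`,
characterised by `φ(w v) = φ(w) φ|_w(v)`. -/
def TreeAut.restrict {X : Type*} (φ : TreeAut X) (w : List X) : List X → List X :=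
  fun v => (φ.toFun (w ++ v)).drop w.length

/-- The set `P_k` of words of length `k` fixed by `φ` whose restriction is nontrivial. -/
def TreeAut.badWords {X : Type*} (φ : TreeAut X) (k : ℕ) : Set (List X) :=
  {w : List X | w.length = k ∧ φ.toFun w = w ∧ φ.restrict w ≠ id}

open MeasureTheory
open scoped ENNReal

/-- The prefix of length `n` of a sequence `x : ℕ → X`, as a word. -/
def prefixWord {X : Type*} (x : ℕ → X) (n : ℕ) : List X :=
  List.ofFn (fun i : Fin n => x i)

/-- The cylinder set of sequences beginning with the word `w`. -/
def cylinder {X : Type*} (w : List X) : Set (ℕ → X) :=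
  {x : ℕ → X | prefixWord x w.length = w}

/-- The homeomorphism of `X^ℕ` induced by a tree automorphism `φ`: the `n`-th letter of
`φ(x)` is the `n`-th letter of `φ` applied to the prefix of `x` of length `n + 1`. -/
def TreeAut.seqAct {X : Type*} (φ : TreeAut X) (x : ℕ → X) : ℕ → X :=
  fun n => (φ.toFun (prefixWord x (n + 1))).getD n (x n)

/-- The fixed-point set in `X^ℕ` of the homeomorphism induced by `φ`. -/
def TreeAut.fixSeq {X : Type*} (φ : TreeAut X) : Set (ℕ → X) :=
  {x : ℕ → X | φ.seqAct x = x}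

/-- A faithful self-similar action of a group `Γ` on the rooted tree `X*`, by tree
automorphisms, such that all restrictions `g|_w` again belong to the action. -/
structure SelfSimilarAction (Γ : Type*) [Group Γ] (X : Type*) where
  act : Γ → TreeAut X
  act_one : ∀ w : List X, (act 1).toFun w = w
  act_mul : ∀ (g h : Γ) (w : List X), (act (g * h)).toFun w = (act g).toFun ((act h).toFun w)
  faithful : ∀ g : Γ, (∀ w : List X, (act g).toFun w = w) → g = 1
  selfSimilar : ∀ (g : Γ) (w : List X), ∃ h : Γ, (act g).restrict w = (act h).toFun

/-- A self-similar action is finite-state if each `g` has only finitely many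
restrictions `g|_w`. -/
def SelfSimilarAction.FiniteState {Γ : Type*} [Group Γ] {X : Type*}
    (S : SelfSimilarAction Γ X) : Prop :=
  ∀ g : Γ, (Set.range fun w : List X => (S.act g).restrict w).Finite

/-- The word `w` followed by the sequence `x`. -/
def wordConcat {X : Type*} (w : List X) (x : ℕ → X) : ℕ → X :=
  fun n => if h : n < w.length then w.get ⟨n, h⟩ else x (n - w.length)

/-- The partial homeomorphism `g_{u,v} : vX^ℕ → uX^ℕ`, `g_{u,v}(v w) = u g(w)`,
implemented as a total map which on the cylinder `vX^ℕ` sends `v·w ↦ u·g(w)`. -/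
def SelfSimilarAction.cosetMap {Γ : Type*} [Group Γ] {X : Type*}
    (S : SelfSimilarAction Γ X) (g : Γ) (u v : List X) (x : ℕ → X) : ℕ → X :=
  wordConcat u ((S.act g).seqAct (fun n => x (n + v.length)))

/-- The fixed-point set of `g_{u,v}` inside its domain `vX^ℕ`. -/
def SelfSimilarAction.fixCosetMap {Γ : Type*} [Group Γ] {X : Type*}
    (S : SelfSimilarAction Γ X) (g : Γ) (u v : List X) : Set (ℕ → X) :=
  {x : ℕ → X | x ∈ cylinder v ∧ S.cosetMap g u v x = x}

namespace TreeAut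
variable {X : Type*} (φ : TreeAut X)

theorem nil_fixed : φ.toFun [] = [] := by
  have := φ.length_eq []
  simpa [List.length_eq_zero_iff] using this

theorem toFun_append (w v : List X) :
    φ.toFun (w ++ v) = φ.toFun w ++ φ.restrict w v := by
  conv_lhs => rw [← List.take_append_drop w.length (φ.toFun (w ++ v))]
  rw [φ.take_append w v]; rfl

theorem length_restrict (w v : List X) : (φ.restrict w v).length = v.length := by
  have := φ.length_eq (w ++ v)
  simp only [restrict, List.length_drop, List.length_append] at *
  omega

theorem take_toFun (w : List X) (m : ℕ) (h : m ≤ w.length) :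
    (φ.toFun w).take m = φ.toFun (w.take m) := by
  have h1 := φ.take_append (w.take m) (w.drop m)
  rw [List.take_append_drop] at h1
  rw [← h1, List.length_take, min_eq_left h]

theorem moves_append {s : List X} (h : φ.toFun s ≠ s) (r : List X) :
    φ.toFun (s ++ r) ≠ s ++ r := by
  intro he
  apply h
  have := φ.take_append s r
  rw [he] at this
  simpa using this.symm

theorem restrict_append (a b r : List X) :
    φ.restrict (a ++ b) r = (φ.restrict a (b ++ r)).drop b.length := by
  simp [restrict, List.append_assoc, List.drop_drop]

end TreeAut
section Pref
variable {X : Type*}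

@[simp] theorem prefixWord_length (x : ℕ → X) (n : ℕ) : (prefixWord x n).length = n := by
  simp [prefixWord]

theorem prefixWord_succ (x : ℕ → X) (n : ℕ) :
    prefixWord x (n + 1) = prefixWord x n ++ [x n] := by
  rw [prefixWord, List.ofFn_succ']
  simp [prefixWord, List.concat_eq_append]

theorem prefixWord_add (x : ℕ → X) (m k : ℕ) :
    prefixWord x (m + k) = prefixWord x m ++ prefixWord (fun n => x (n + m)) k := by
  induction k with
  | zero => simp [prefixWord]
  | succ k ih =>
    rw [← Nat.add_assoc, prefixWord_succ, ih, prefixWord_succ, List.append_assoc]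
    congr 2
    rw [Nat.add_comm m k]

theorem prefixWord_take (x : ℕ → X) (m n : ℕ) (h : m ≤ n) :
    (prefixWord x n).take m = prefixWord x m := by
  obtain ⟨k, rfl⟩ := Nat.exists_eq_add_of_le h
  rw [prefixWord_add]
  simp

theorem prefixWord_wordConcat (w : List X) (x : ℕ → X) :
    prefixWord (wordConcat w x) w.length = w := by
  apply List.ext_get (by simp)
  intro i h1 h2
  simp only [prefixWord, List.get_ofFn, wordConcat]
  simp at h1
  simp [h1]

theorem wordConcat_inj (w : List X) {x y : ℕ → X} (h : wordConcat w x = wordConcat w y) :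
    x = y := by
  funext n
  have := congrFun h (n + w.length)
  simpa [wordConcat] using this

end Pref
section Seq
variable {X : Type*}

theorem getD_append_singleton (l : List X) (c d : X) : (l ++ [c]).getD l.length d = c := by
  simp [List.getD_eq_getElem?_getD, List.getElem?_append_right]

theorem fixSeq_iff (φ : TreeAut X) (x : ℕ → X) :
    x ∈ φ.fixSeq ↔ ∀ n, φ.toFun (prefixWord x n) = prefixWord x n := by
  constructor
  · intro h n
    induction n with
    | zero => simpa [prefixWord] using φ.nil_fixed
    | succ n ih =>
      rw [prefixWord_succ, φ.toFun_append, ih]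
      have hlen : (φ.restrict (prefixWord x n) [x n]).length = 1 := by
        rw [φ.length_restrict]; rfl
      obtain ⟨c, hc⟩ := List.length_eq_one_iff.mp hlen
      rw [hc]
      have hx : φ.seqAct x n = x n := congrFun h n
      have : φ.seqAct x n = c := by
        unfold TreeAut.seqAct
        rw [prefixWord_succ, φ.toFun_append, ih, hc]
        have := getD_append_singleton (prefixWord x n) c (x n)
        rwa [prefixWord_length] at this
      rw [← hx, this]
  · intro h
    funext n
    show (φ.toFun (prefixWord x (n + 1))).getD n (x n) = x n
    rw [h (n + 1), prefixWord_succ]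
    have := getD_append_singleton (prefixWord x n) (x n) (x n)
    rwa [prefixWord_length] at this

theorem mem_cylinder_iff (w : List X) (x : ℕ → X) :
    x ∈ cylinder w ↔ ∀ (n : ℕ) (hn : n < w.length), x n = w.get ⟨n, hn⟩ := by
  have key : ∀ (l l' : List X) (h : l = l') (n : ℕ) (hn : n < l.length), l[n] = l'[n]'(h ▸ hn) := by
    intro l l' h n hn; subst h; rfl
  constructor
  · intro h n hn
    have h2 := key _ _ h n (by simpa using hn)
    simp only [List.get_eq_getElem]
    rw [← h2]
    simp [prefixWord]
  · intro h
    apply List.ext_get (by simp)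
    intro n h1 h2
    simp only [prefixWord, List.get_ofFn, Fin.coe_cast]
    exact h n h2

theorem isOpen_cylinder [TopologicalSpace X] [DiscreteTopology X] (w : List X) :
    IsOpen (cylinder w) := by
  have : cylinder w = ⋂ i : Fin w.length, (fun x : ℕ → X => x i) ⁻¹' {w.get i} := by
    ext x
    simp only [Set.mem_iInter, Set.mem_preimage, Set.mem_singleton_iff, mem_cylinder_iff]
    exact ⟨fun h i => h i i.2, fun h n hn => h ⟨n, hn⟩⟩
  rw [this]
  exact isOpen_iInter_of_finite fun i =>
    (continuous_apply (i : ℕ)).isOpen_preimage _ (isOpen_discrete _)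

theorem mem_interior_of_cylinder_subset [TopologicalSpace X] [DiscreteTopology X]
    {w : List X} {s : Set (ℕ → X)} (hsub : cylinder w ⊆ s) {x : ℕ → X}
    (hx : x ∈ cylinder w) : x ∈ interior s :=
  interior_maximal hsub (isOpen_cylinder w) hx

end Seq
section Fix
variable {Γ : Type*} [Group Γ] {X : Type*} (S : SelfSimilarAction Γ X) (g : Γ)

theorem fixCosetMap_empty (u v : List X) (hlen : u.length = v.length) (huv : u ≠ v) :
    S.fixCosetMap g u v = ∅ := by
  ext x
  simp only [SelfSimilarAction.fixCosetMap, Set.mem_setOf_eq, Set.mem_empty_iff_false,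
    iff_false, not_and]
  intro h1 h2
  apply huv
  have hu : prefixWord x u.length = u := by
    conv_lhs => rw [← h2]
    exact prefixWord_wordConcat u _
  have hv : prefixWord x v.length = v := h1
  rw [← hu, hlen, hv]

theorem mem_fixCosetMap_iff (v : List X) (x : ℕ → X) :
    x ∈ S.fixCosetMap g v v ↔ prefixWord x v.length = v ∧
      ∀ n, (S.act g).toFun (prefixWord (fun m => x (m + v.length)) n) =
        prefixWord (fun m => x (m + v.length)) n := by
  unfold SelfSimilarAction.fixCosetMap SelfSimilarAction.cosetMap
  rw [Set.mem_setOf_eq, ← fixSeq_iff]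
  constructor
  · rintro ⟨h1, h2⟩
    refine ⟨h1, ?_⟩
    funext n
    conv_rhs => rw [← h2]
    simp [wordConcat]
  · rintro ⟨h1, h2⟩
    refine ⟨h1, ?_⟩
    rw [show ((S.act g).seqAct fun n => x (n + v.length)) = fun n => x (n + v.length) from h2]
    funext n
    by_cases hn : n < v.length
    · simp only [wordConcat, dif_pos hn]
      exact ((mem_cylinder_iff v x).mp h1 n hn).symm
    · simp only [wordConcat, dif_neg hn]
      congr 1
      omega

theorem cylinder_subset_fix (v w : List X) (hw : (S.act g).toFun w = w)
    (hid : (S.act g).restrict w = id) : cylinder (v ++ w) ⊆ S.fixCosetMap g v v := by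
  intro x hx
  rw [mem_fixCosetMap_iff]
  have hx' : prefixWord x (v.length + w.length) = v ++ w := by
    rw [← List.length_append]; exact hx
  rw [prefixWord_add] at hx'
  set y := fun m => x (m + v.length) with hy_def
  have hv : prefixWord x v.length = v := by
    have := congrArg (List.take v.length) hx'
    simpa using this
  rw [hv] at hx'
  have hy : prefixWord y w.length = w := by
    exact (List.append_cancel_left hx' :)
  refine ⟨hv, ?_⟩
  intro n
  rcases le_or_gt n w.length with hn | hn
  · have hpre : prefixWord y n = w.take n := by
      rw [← hy, prefixWord_take _ n w.length hn]
    rw [hpre, ← (S.act g).take_toFun w n hn, hw]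
  · obtain ⟨k, rfl⟩ : ∃ k, n = w.length + k := ⟨n - w.length, by omega⟩
    rw [prefixWord_add, hy, (S.act g).toFun_append, hw, hid]
    rfl

theorem fix_diff_interior_subset [TopologicalSpace X] [DiscreteTopology X] (v : List X) (k : ℕ) :
    S.fixCosetMap g v v \ interior (S.fixCosetMap g v v) ⊆
      ⋃ w ∈ (S.act g).badWords k, cylinder (v ++ w) := by
  intro x hx
  obtain ⟨hxf, hnx⟩ := hx
  rw [mem_fixCosetMap_iff] at hxf
  obtain ⟨hv, hfix⟩ := hxf
  set y := fun m => x (m + v.length) with hy_def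
  set w := prefixWord y k with hw_def
  have hwlen : w.length = k := prefixWord_length _ _
  have hgw : (S.act g).toFun w = w := by rw [hw_def]; exact hfix k
  have hxw : x ∈ cylinder (v ++ w) := by
    show prefixWord x (v ++ w).length = v ++ w
    rw [List.length_append, hwlen, prefixWord_add, hv, hw_def]
  have hres : (S.act g).restrict w ≠ id := by
    intro hid
    exact hnx (mem_interior_of_cylinder_subset (cylinder_subset_fix S g v w hgw hid) hxw)
  exact Set.mem_biUnion ⟨hwlen, hgw, hres⟩ hxw

end Fix
section Count
open scoped Classical
variable {X : Type*} [Fintype X]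

noncomputable def allWords (X : Type*) [Fintype X] (k : ℕ) : Finset (List X) :=
  Finset.image List.ofFn (Finset.univ : Finset (Fin k → X))

theorem mem_allWords {k : ℕ} {w : List X} : w ∈ allWords X k ↔ w.length = k := by
  constructor
  · rintro h
    simp only [allWords, Finset.mem_image] at h
    obtain ⟨f, -, rfl⟩ := h
    simp
  · intro h
    simp only [allWords, Finset.mem_image]
    refine ⟨fun i : Fin k => w.get (Fin.cast h.symm i), Finset.mem_univ _, ?_⟩
    apply List.ext_get (by simpa using h.symm)
    intro n h1 h2
    simp

theorem card_allWords (k : ℕ) : (allWords X k).card = Fintype.card X ^ k := by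
  rw [allWords, Finset.card_image_of_injective _ List.ofFn_injective]
  simp

noncomputable def badFinset (φ : TreeAut X) (k : ℕ) : Finset (List X) :=
  (allWords X k).filter (fun w => φ.toFun w = w ∧ φ.restrict w ≠ id)

theorem mem_badFinset {φ : TreeAut X} {k : ℕ} {w : List X} :
    w ∈ badFinset φ k ↔ w ∈ φ.badWords k := by
  simp [badFinset, mem_allWords, TreeAut.badWords, and_assoc]

theorem badFinset_zero_card (φ : TreeAut X) : (badFinset φ 0).card ≤ 1 := by
  calc (badFinset φ 0).card ≤ (allWords X 0).card :=
        Finset.card_le_card (Finset.filter_subset _ _)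
    _ = 1 := by rw [card_allWords]; rfl

end Count
section Key
open scoped Classical
variable {Γ : Type*} [Group Γ] {X : Type*} [Fintype X]

theorem exists_uniform_N (hX : 2 ≤ Fintype.card X) (S : SelfSimilarAction Γ X)
    (hfs : S.FiniteState) (g : Γ) :
    ∃ N : ℕ, 1 ≤ N ∧ ∀ w : List X, (S.act g).restrict w ≠ id →
      ∃ t : List X, t.length = N ∧ (S.act g).restrict w t ≠ t := by
  have hne : Nonempty X := Fintype.card_pos_iff.mp (by omega)
  obtain ⟨x₀⟩ := hne
  set m : (List X → List X) → ℕ := fun q =>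
    if h : ∃ s, q s ≠ s then (Classical.choose h).length else 0 with hm
  have hfin : ((m '' Set.range fun w : List X => (S.act g).restrict w)).Finite :=
    (hfs g).image m
  obtain ⟨N₀, hN₀⟩ := hfin.bddAbove
  refine ⟨N₀ + 1, by omega, ?_⟩
  intro w hw
  have hex : ∃ s, (S.act g).restrict w s ≠ s := by
    by_contra hc
    push_neg at hc
    exact hw (funext hc)
  set s := Classical.choose hex with hs_def
  have hs : (S.act g).restrict w s ≠ s := Classical.choose_spec hex
  have hslen : s.length ≤ N₀ := by
    have hmem : m ((S.act g).restrict w) ∈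
        m '' Set.range (fun w : List X => (S.act g).restrict w) :=
      Set.mem_image_of_mem m ⟨w, rfl⟩
    have := hN₀ hmem
    rw [hm] at this
    simp only [dif_pos hex] at this
    exact this
  obtain ⟨h', hh'⟩ := S.selfSimilar g w
  rw [hh'] at hs ⊢
  refine ⟨s ++ List.replicate (N₀ + 1 - s.length) x₀, by simp; omega, ?_⟩
  exact (S.act h').moves_append hs _

theorem badFinset_card_step (hX : 2 ≤ Fintype.card X) (S : SelfSimilarAction Γ X) (g : Γ)
    {N : ℕ}
    (hN : ∀ w : List X, (S.act g).restrict w ≠ id →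
      ∃ t : List X, t.length = N ∧ (S.act g).restrict w t ≠ t) (k : ℕ) :
    (badFinset (S.act g) (k + N)).card ≤
      (badFinset (S.act g) k).card * (Fintype.card X ^ N - 1) := by
  set φ := S.act g with hφ
  have hsub : badFinset φ (k + N) ⊆ (badFinset φ k).biUnion (fun a =>
      ((allWords X N).filter (fun b => φ.toFun (a ++ b) = a ++ b)).image (a ++ ·)) := by
    intro w' hw'
    rw [mem_badFinset] at hw'
    obtain ⟨hlen, hfix, hres⟩ := hw'
    have hsplit : w'.take k ++ w'.drop k = w' := List.take_append_drop k w'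
    have htk : (w'.take k).length = k := by simp [hlen]
    have hdk : (w'.drop k).length = N := by simp [hlen]
    have hfa : φ.toFun (w'.take k) = w'.take k := by
      have h1 := φ.take_toFun w' k (by omega)
      rw [hfix] at h1
      rw [← h1]
    have hra : φ.restrict (w'.take k) ≠ id := by
      intro hid
      apply hres
      funext r
      rw [← hsplit, φ.restrict_append, hid]
      simp
    rw [Finset.mem_biUnion]
    refine ⟨w'.take k, mem_badFinset.mpr ⟨htk, hfa, hra⟩, ?_⟩
    rw [Finset.mem_image]
    refine ⟨w'.drop k, ?_, hsplit⟩
    rw [Finset.mem_filter]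
    exact ⟨mem_allWords.mpr hdk, by rw [hsplit]; exact hfix⟩
  calc (badFinset φ (k + N)).card
      ≤ ((badFinset φ k).biUnion _).card := Finset.card_le_card hsub
    _ ≤ ∑ a ∈ badFinset φ k,
        (((allWords X N).filter (fun b => φ.toFun (a ++ b) = a ++ b)).image (a ++ ·)).card :=
        Finset.card_biUnion_le
    _ ≤ ∑ a ∈ badFinset φ k, (Fintype.card X ^ N - 1) := by
        apply Finset.sum_le_sum
        intro a ha
        rw [mem_badFinset] at ha
        obtain ⟨halen, hafix, hares⟩ := ha
        obtain ⟨t, htlen, ht⟩ := hN a hares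
        calc (((allWords X N).filter (fun b => φ.toFun (a ++ b) = a ++ b)).image (a ++ ·)).card
            ≤ ((allWords X N).filter (fun b => φ.toFun (a ++ b) = a ++ b)).card :=
              Finset.card_image_le
          _ ≤ ((allWords X N).erase t).card := by
              apply Finset.card_le_card
              intro b hb
              rw [Finset.mem_filter] at hb
              obtain ⟨hb1, hb2⟩ := hb
              rw [Finset.mem_erase]
              refine ⟨?_, hb1⟩
              rintro rfl
              apply ht
              rw [φ.toFun_append, hafix] at hb2
              exact List.append_cancel_left hb2
          _ = Fintype.card X ^ N - 1 := by
              rw [Finset.card_erase_of_mem (mem_allWords.mpr htlen), card_allWords]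
    _ = (badFinset φ k).card * (Fintype.card X ^ N - 1) := by
        rw [Finset.sum_const, smul_eq_mul]

theorem badFinset_card_pow (hX : 2 ≤ Fintype.card X) (S : SelfSimilarAction Γ X) (g : Γ)
    {N : ℕ}
    (hN : ∀ w : List X, (S.act g).restrict w ≠ id →
      ∃ t : List X, t.length = N ∧ (S.act g).restrict w t ≠ t) (m : ℕ) :
    (badFinset (S.act g) (m * N)).card ≤ (Fintype.card X ^ N - 1) ^ m := by
  induction m with
  | zero => simpa using badFinset_zero_card (S.act g)
  | succ m ih =>
    have : (m + 1) * N = m * N + N := by ring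
    rw [this]
    calc (badFinset (S.act g) (m * N + N)).card
        ≤ (badFinset (S.act g) (m * N)).card * (Fintype.card X ^ N - 1) :=
          badFinset_card_step hX S g hN (m * N)
      _ ≤ (Fintype.card X ^ N - 1) ^ m * (Fintype.card X ^ N - 1) :=
          Nat.mul_le_mul_right _ ih
      _ = (Fintype.card X ^ N - 1) ^ (m + 1) := by ring

end Key
/-- Let `Γ` act faithfully and self-similarly on `X*` (`|X| ≥ 2`),
with every `g ∈ Γ` finite-state.  For `u, v ∈ X*` of equal length and `g ∈ Γ`, the
Bernoulli measure `μ` on `X^ℕ` satisfies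
`μ(Fix_{g_{u,v}} \ interior Fix_{g_{u,v}}) = 0`. -/
theorem selfSimilar_fix_boundary_null
    {Γ : Type*} [Group Γ] {X : Type*} [Fintype X] [TopologicalSpace X]
    [DiscreteTopology X] [MeasurableSpace X] (hX : 2 ≤ Fintype.card X)
    (S : SelfSimilarAction Γ X) (hfs : S.FiniteState)
    (μ : MeasureTheory.Measure (ℕ → X))
    (hμ : ∀ w : List X, μ (cylinder w) = ((Fintype.card X : ℝ≥0∞))⁻¹ ^ w.length) :
    ∀ (g : Γ) (u v : List X), u.length = v.length →
      μ (S.fixCosetMap g u v \ interior (S.fixCosetMap g u v)) = 0 := by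
  intro g u v hlen
  by_cases huv : u = v
  · subst huv
    obtain ⟨N, hN1, hN⟩ := exists_uniform_N hX S hfs g
    set c : ℝ≥0∞ := ((Fintype.card X : ℝ≥0∞))⁻¹ with hc
    set M : ℕ := Fintype.card X ^ N - 1 with hM
    have hcard0 : ((Fintype.card X : ℝ≥0∞)) ≠ 0 := by
      simp; omega
    have hcardtop : ((Fintype.card X : ℝ≥0∞)) ≠ ∞ := by simp
    set r : ℝ≥0∞ := (M : ℝ≥0∞) * c ^ N with hr
    have hMlt : (M : ℝ≥0∞) < ((Fintype.card X : ℝ≥0∞)) ^ N := by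
      have h1 : M < Fintype.card X ^ N := by
        have : 0 < Fintype.card X ^ N := Nat.pow_pos (by omega)
        omega
      exact_mod_cast h1
    have hrlt : r < 1 := by
      rw [hr, hc, ← ENNReal.inv_pow]
      rw [show (1 : ℝ≥0∞) = ((Fintype.card X : ℝ≥0∞)) ^ N * (((Fintype.card X : ℝ≥0∞)) ^ N)⁻¹
        from (ENNReal.mul_inv_cancel (pow_ne_zero N hcard0) (ENNReal.pow_ne_top hcardtop)).symm]
      exact ENNReal.mul_lt_mul_left (ENNReal.inv_ne_zero.mpr (ENNReal.pow_ne_top hcardtop))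
        (ENNReal.inv_ne_top.mpr (pow_ne_zero N hcard0)) hMlt
    have key : ∀ m : ℕ,
        μ (S.fixCosetMap g u u \ interior (S.fixCosetMap g u u)) ≤ c ^ u.length * r ^ m := by
      intro m
      have h1 : μ (S.fixCosetMap g u u \ interior (S.fixCosetMap g u u)) ≤
          μ (⋃ w ∈ badFinset (S.act g) (m * N), cylinder (u ++ w)) := by
        apply measure_mono
        refine (fix_diff_interior_subset S g u (m * N)).trans ?_
        apply Set.iUnion₂_subset
        intro w hw
        exact Set.subset_biUnion_of_mem (u := fun w => cylinder (u ++ w))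
          (mem_badFinset.mpr hw)
      have h2 : μ (⋃ w ∈ badFinset (S.act g) (m * N), cylinder (u ++ w)) ≤
          ∑ w ∈ badFinset (S.act g) (m * N), μ (cylinder (u ++ w)) :=
        measure_biUnion_finset_le _ _
      have h3 : ∑ w ∈ badFinset (S.act g) (m * N), μ (cylinder (u ++ w)) =
          (badFinset (S.act g) (m * N)).card * c ^ (u.length + m * N) := by
        rw [Finset.sum_congr rfl (fun w hw => ?_), Finset.sum_const, nsmul_eq_mul]
        rw [hμ, List.length_append, (mem_badFinset.mp hw).1]
      have h4 : ((badFinset (S.act g) (m * N)).card : ℝ≥0∞) ≤ (M : ℝ≥0∞) ^ m := by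
        rw [← Nat.cast_pow]
        exact_mod_cast badFinset_card_pow hX S g hN m
      calc μ (S.fixCosetMap g u u \ interior (S.fixCosetMap g u u))
          ≤ (badFinset (S.act g) (m * N)).card * c ^ (u.length + m * N) :=
            h1.trans (h2.trans h3.le)
        _ ≤ (M : ℝ≥0∞) ^ m * c ^ (u.length + m * N) :=
            mul_le_mul_left h4 _
        _ = c ^ u.length * r ^ m := by
            rw [hr, mul_pow, pow_add, pow_mul]
            ring
    have htend : Filter.Tendsto (fun m : ℕ => c ^ u.length * r ^ m)
        Filter.atTop (nhds 0) := by
      have h0 := ENNReal.tendsto_pow_atTop_nhds_zero_of_lt_one hrlt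
      have := ENNReal.Tendsto.const_mul (a := c ^ u.length) h0
        (Or.inr (ENNReal.pow_ne_top (ENNReal.inv_ne_top.mpr hcard0)))
      simpa using this
    have : μ (S.fixCosetMap g u u \ interior (S.fixCosetMap g u u)) ≤ 0 :=
      ge_of_tendsto' htend key
    exact le_antisymm this zero_le
  · rw [fixCosetMap_empty S g u v hlen huv]
    simp
end

section
/- Let G be an étale groupoid, τ a trace on C*(G) (or any positive tracial linear functional on the convolution algebra C_c(G) bounded on each C_c(U)), and U ⊆ G an open bisection with U ∩ Iso(G) = ∅ and s(U) ∩ r(U) = ∅. Then τ(f) = 0 for every f ∈ C_c(U). -/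
open MeasureTheory
open scoped ENNReal

open EtaleGroupoid in
/-- Let `G` be an étale groupoid, `τ` a positive tracial linear
functional on the convolution algebra `𝒞_c(G)` (e.g. the restriction of a trace on
`C*(G)`), and `U ⊆ G` an open bisection with `U ∩ Iso(G) = ∅` and `s(U) ∩ r(U) = ∅`.
Then `τ(f) = 0` for every `f ∈ C_c(U)`. -/
theorem trace_vanishes_on_bisection_off_isotropy
    {G : Type*} [TopologicalSpace G] (E : EtaleGroupoid G)
    (τ : Cc G →ₗ[ℂ] ℂ)
    (htracial : ∀ (a b : G → ℂ) (_ : a ∈ Cc G) (_ : b ∈ Cc G)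
      (hab : E.convolution a b ∈ Cc G) (hba : E.convolution b a ∈ Cc G),
      τ ⟨E.convolution a b, hab⟩ = τ ⟨E.convolution b a, hba⟩)
    (U : Set G) (hU : E.IsBisection U)
    (hUiso : U ∩ E.iso = ∅)
    (hsr : (E.src '' U) ∩ (E.rng '' U) = ∅)
    (f : G → ℂ) (hfU : ∀ g ∉ U, f g = 0) (hfc : ContinuousOn f U)
    (hsupp : ∃ K : Set G, K ⊆ U ∧ IsCompact K ∧ ∀ g ∉ K, f g = 0)
    (hf : f ∈ Cc G) :
    τ ⟨f, hf⟩ = 0 := by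
  classical
  obtain ⟨K, hKU, hKc, hKz⟩ := hsupp
  -- `src` and `rng` are continuous
  have hsrc_cont : Continuous E.src := by
    rw [continuous_iff_continuousAt]
    intro g
    obtain ⟨V, hVo, hgV, -, hVc, -⟩ := E.etale_src g
    exact hVc.continuousAt (hVo.mem_nhds hgV)
  have hrng_cont : Continuous E.rng := by
    rw [continuous_iff_continuousAt]
    intro g
    obtain ⟨V, hVo, hgV, -, hVc, -⟩ := E.etale_rng g
    exact hVc.continuousAt (hVo.mem_nhds hgV)
  -- the unit space as a topological space
  haveI hT2 : T2Space E.unitSpace := by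
    constructor
    intro x y hxy
    obtain ⟨V, W, hVo, hWo, hxV, hyW, hVW⟩ :=
      E.t2_unitSpace x x.2 y y.2 (fun h => hxy (Subtype.ext h))
    exact ⟨Subtype.val ⁻¹' V, Subtype.val ⁻¹' W,
      hVo.preimage continuous_subtype_val, hWo.preimage continuous_subtype_val, hxV, hyW,
      (Set.disjoint_iff_inter_eq_empty.mpr hVW).preimage _⟩
  haveI hLC : LocallyCompactSpace E.unitSpace := by
    constructor
    intro x n hn
    obtain ⟨t, ht, htn⟩ := (mem_nhds_subtype _ x n).mp hn
    obtain ⟨W, hWt, hWo, hxW⟩ := mem_nhds_iff.mp ht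
    obtain ⟨K', V, hK'c, hVo, hxV, hVK', hK'W⟩ :=
      E.locallyCompact_unitSpace (x : G) x.2 W hWo hxW
    refine ⟨Subtype.val ⁻¹' K', ?_, ?_, ?_⟩
    · exact mem_nhds_iff.mpr ⟨Subtype.val ⁻¹' V, Set.preimage_mono hVK',
        hVo.preimage continuous_subtype_val, hxV⟩
    · exact fun z hz => htn (hWt ((hK'W hz).1))
    · rw [Subtype.isCompact_iff]
      have : Subtype.val '' (Subtype.val ⁻¹' K' : Set E.unitSpace) = K' := by
        rw [Set.image_preimage_eq_inter_range, Subtype.range_coe]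
        exact Set.inter_eq_self_of_subset_left (fun z hz => (hK'W hz).2)
      rw [this]; exact hK'c
  -- the compact sets `src '' K` and `rng '' K` inside the unit space
  have hAc : IsCompact (E.src '' K) := hKc.image hsrc_cont
  have hBc : IsCompact (E.rng '' K) := hKc.image hrng_cont
  have hAS : E.src '' K ⊆ E.unitSpace := by rintro - ⟨g, -, rfl⟩; exact E.src_mem g
  have hBS : E.rng '' K ⊆ E.unitSpace := by rintro - ⟨g, -, rfl⟩; exact E.rng_mem g
  have hpre : ∀ C : Set G, C ⊆ E.unitSpace →
      Subtype.val '' (Subtype.val ⁻¹' C : Set E.unitSpace) = C := by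
    intro C hC
    rw [Set.image_preimage_eq_inter_range, Subtype.range_coe]
    exact Set.inter_eq_self_of_subset_left hC
  have hA'c : IsCompact (Subtype.val ⁻¹' (E.src '' K) : Set E.unitSpace) := by
    rw [Subtype.isCompact_iff, hpre _ hAS]; exact hAc
  have hB'c : IsCompact (Subtype.val ⁻¹' (E.rng '' K) : Set E.unitSpace) := by
    rw [Subtype.isCompact_iff, hpre _ hBS]; exact hBc
  have hdisj : Disjoint (Subtype.val ⁻¹' (E.src '' K) : Set E.unitSpace)
      (Subtype.val ⁻¹' (E.rng '' K)) := by
    refine Disjoint.preimage _ (Set.disjoint_iff_inter_eq_empty.mpr ?_)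
    rw [← Set.subset_empty_iff, ← hsr]
    exact Set.inter_subset_inter (Set.image_mono hKU) (Set.image_mono hKU)
  obtain ⟨φ, hφ1, hφ0, hφsupp, hφ01⟩ :=
    exists_continuous_one_zero_of_isCompact hA'c hB'c.isClosed hdisj
  -- the bump function on `G`
  set h : G → ℂ := fun g => if hg : g ∈ E.unitSpace then ((φ ⟨g, hg⟩ : ℝ) : ℂ) else 0 with hhdef
  have h_out : ∀ g ∉ E.unitSpace, h g = 0 := fun g hg => dif_neg hg
  have h_in : ∀ g (hg : g ∈ E.unitSpace), h g = ((φ ⟨g, hg⟩ : ℝ) : ℂ) := fun g hg => dif_pos hg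
  have h_one : ∀ g ∈ K, h (E.src g) = 1 := by
    intro g hg
    rw [h_in _ (E.src_mem g)]
    have : φ ⟨E.src g, E.src_mem g⟩ = 1 :=
      hφ1 (show (⟨E.src g, E.src_mem g⟩ : E.unitSpace) ∈ Subtype.val ⁻¹' (E.src '' K) from
        ⟨g, hg, rfl⟩)
    rw [this]; norm_num
  have h_zero : ∀ g ∈ K, h (E.rng g) = 0 := by
    intro g hg
    rw [h_in _ (E.rng_mem g)]
    have : φ ⟨E.rng g, E.rng_mem g⟩ = 0 :=
      hφ0 (show (⟨E.rng g, E.rng_mem g⟩ : E.unitSpace) ∈ Subtype.val ⁻¹' (E.rng '' K) from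
        ⟨g, hg, rfl⟩)
    rw [this]; norm_num
  -- `h` lies in the convolution algebra
  have hh : h ∈ Cc G := by
    apply Submodule.subset_span
    refine ⟨E.unitSpace, E.isOpen_unitSpace, E.t2_unitSpace, ?_, ?_⟩
    · rw [continuousOn_iff_continuous_restrict]
      have : Set.domRestrict E.unitSpace h = fun x : E.unitSpace => ((φ x : ℝ) : ℂ) := by
        funext x
        simp only [Set.domRestrict_apply]
        rw [h_in _ x.2]
      rw [this]
      exact Complex.continuous_ofReal.comp φ.continuous
    · refine ⟨Subtype.val '' tsupport φ, ?_, hφsupp.image continuous_subtype_val, ?_⟩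
      · rintro - ⟨x, -, rfl⟩; exact x.2
      · intro g hg
        by_cases hgS : g ∈ E.unitSpace
        · rw [h_in _ hgS]
          have : (⟨g, hgS⟩ : E.unitSpace) ∉ tsupport φ := fun hc => hg ⟨⟨g, hgS⟩, hc, rfl⟩
          rw [image_eq_zero_of_notMem_tsupport this]; norm_num
        · exact h_out g hgS
  -- the two convolution identities
  have hconv1 : E.convolution f h = f := by
    funext g
    show (∑' p : {p : G × G // E.src p.1 = E.rng p.2 ∧ E.mul p.1 p.2 = g},
      f p.1.1 * h p.1.2) = f g
    have key : ∀ p : {p : G × G // E.src p.1 = E.rng p.2 ∧ E.mul p.1 p.2 = g},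
        p ≠ ⟨(g, E.src g), (E.rng_unit _ (E.src_mem g)).symm, E.mul_src_self g⟩ →
        f p.1.1 * h p.1.2 = 0 := by
      rintro ⟨⟨g₁, g₂⟩, hsr12, hmul⟩ hp
      by_contra hc
      obtain ⟨hf1, hh2⟩ := mul_ne_zero_iff.mp hc
      have hg₂S : g₂ ∈ E.unitSpace := by
        by_contra hn; exact hh2 (h_out g₂ hn)
      have h1 : E.src g₁ = g₂ := by rw [hsr12, E.rng_unit _ hg₂S]
      have h2 : g₁ = g := by rw [← hmul, ← h1, E.mul_src_self]
      have : ((g₁, g₂) : G × G) = (g, E.src g) := by rw [← h1, h2]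
      exact hp (Subtype.ext this)
    rw [tsum_eq_single _ key]
    by_cases hg : g ∈ K
    · show f g * h (E.src g) = f g
      rw [h_one g hg, mul_one]
    · show f g * h (E.src g) = f g
      rw [hKz g hg, zero_mul]
  have hconv2 : E.convolution h f = 0 := by
    funext g
    show (∑' p : {p : G × G // E.src p.1 = E.rng p.2 ∧ E.mul p.1 p.2 = g},
      h p.1.1 * f p.1.2) = 0
    have key : ∀ p : {p : G × G // E.src p.1 = E.rng p.2 ∧ E.mul p.1 p.2 = g},
        p ≠ ⟨(E.rng g, g), E.src_unit _ (E.rng_mem g), E.rng_mul_self g⟩ →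
        h p.1.1 * f p.1.2 = 0 := by
      rintro ⟨⟨g₁, g₂⟩, hsr12, hmul⟩ hp
      by_contra hc
      obtain ⟨hh1, hf2⟩ := mul_ne_zero_iff.mp hc
      have hg₁S : g₁ ∈ E.unitSpace := by
        by_contra hn; exact hh1 (h_out g₁ hn)
      have h1 : g₁ = E.rng g₂ := by rw [← hsr12, E.src_unit _ hg₁S]
      have h2 : g₂ = g := by rw [← hmul, h1, E.rng_mul_self]
      have : ((g₁, g₂) : G × G) = (E.rng g, g) := by rw [h1, h2]
      exact hp (Subtype.ext this)
    rw [tsum_eq_single _ key]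
    by_cases hg : g ∈ K
    · show h (E.rng g) * f g = 0
      rw [h_zero g hg, zero_mul]
    · show h (E.rng g) * f g = 0
      rw [hKz g hg, mul_zero]
  -- conclude via traciality
  have hab : E.convolution f h ∈ Cc G := by rw [hconv1]; exact hf
  have hba : E.convolution h f ∈ Cc G := by rw [hconv2]; exact (Cc G).zero_mem
  have htr := htracial f h hf hh hab hba
  have e1 : (⟨E.convolution f h, hab⟩ : Cc G) = ⟨f, hf⟩ := Subtype.ext hconv1
  have e2 : (⟨E.convolution h f, hba⟩ : Cc G) = 0 := Subtype.ext hconv2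
  rw [e1, e2] at htr
  rw [htr, map_zero]
end
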